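/- Let A be a Banach algebra with a right identity e, and let d : A → A be a Jordan left derivation. Then d(a) = d(e·a) for all a ∈ A. -/
import Mathlib

/-- Helper: cancel an equal hypothesis in an abelian group. -/
theorem eq_of_sub_eq_sub' {M : Type*} [AddCommGroup M] {x y p q : M}
    (h : p = q) (hc : x - y = p - q) : x = y := by
  rw [h, sub_self, sub_eq_zero] at hc
  exact hc

/-- Helper: combine three linear hypotheses in an abelian group. -/
theorem eq_of_sub_eq_comb3 {M : Type*} [AddCommGroup M] {x y p q r s t u : M}
    (h1 : p = q) (h2 : r = s) (h3 : t = u)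
    (hc : x - y = (p - q) + (r - s) + (t - u)) : x = y := by
  rw [h1, h2, h3, sub_self, sub_self, sub_self, add_zero, add_zero, sub_eq_zero] at hc
  exact hc

/-- Let `A` be a complex Banach algebra with a right identity `e`, and let
`d : A → A` be a Jordan left derivation (`d (a²) = 2 • (a * d a)`).  Then `d a = d (e * a)`
for all `a ∈ A`. -/
theorem jordanLeftDerivation_eq_on_left_mul_rightIdentity
    {A : Type*} [NonUnitalNormedRing A] [NormedSpace ℂ A]
    [IsScalarTower ℂ A A] [SMulCommClass ℂ A A] [CompleteSpace A]
    (e : A) (he : ∀ a : A, a * e = a)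
    (d : A →ₗ[ℂ] A) (hd : ∀ a : A, d (a * a) = 2 • (a * d a)) :
    ∀ a : A, d a = d (e * a) := by
  have hee : e * e = e := he e
  -- Polarization of the Jordan left derivation identity.
  have P : ∀ a b : A, d (a * b) + d (b * a) = 2 • (a * d b) + 2 • (b * d a) := by
    intro a b
    have h := hd (a + b)
    simp only [mul_add, add_mul, map_add] at h
    rw [hd a, hd b] at h
    exact eq_of_sub_eq_sub' h (by abel)
  -- Specialization with the right identity.
  have S : ∀ a : A, d a + d (e * a) = 2 • (a * d e) + 2 • (e * d a) := by
    intro a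
    have h := P a e
    rwa [he a] at h
  -- Key identity.
  have K : ∀ a : A, 2 • (a * a * d e) + 2 • (a * d a) = 2 • (e * a * d a) := by
    intro a
    have h1 := P a (e * a)
    simp only [← mul_assoc, he a] at h1
    rw [hd a] at h1
    -- h1 : 2•(a * d a) + d (e*a*a) = 2•(a * d (e*a)) + 2•(e*a * d a)
    have h2 := S (a * a)
    rw [hd a] at h2
    simp only [mul_smul_comm, ← mul_assoc] at h2
    -- h2 : 2•(a * d a) + d (e*a*a) = 2•(a*a * d e) + 2•(2•(e*a * d a))
    have h3 := congrArg (fun x => 2 • (a * x)) (S a)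
    simp only [mul_add, smul_add, mul_smul_comm, ← mul_assoc, he a] at h3
    -- h3 : 2•(a * d a) + 2•(a * d (e*a)) = 2•(2•(a*a * d e)) + 2•(2•(a * d a))
    exact eq_of_sub_eq_comb3 h1.symm h2 h3.symm (by abel)
  -- `2 • (e * d e) = 0` from `K e`.
  have hede : 2 • (e * d e) = 0 := by
    have h := K e
    rw [hee] at h
    exact eq_of_sub_eq_sub' h (by abel)
  -- hence `d e = 0`.
  have hde : d e = 0 := by
    have h := hd e
    rw [hee, hede] at h
    exact h
  -- Simplified specialization.
  have S' : ∀ a : A, d a + d (e * a) = 2 • (e * d a) := by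
    intro a
    have h := S a
    rwa [hde, mul_zero, smul_zero, zero_add] at h
  intro a
  have h1 := S' (e * a)
  simp only [← mul_assoc, hee] at h1
  -- h1 : d (e*a) + d (e*a) = 2 • (e * d (e*a))
  have h2 := congrArg (fun x => e * x) (S' a)
  simp only [mul_add, mul_smul_comm, ← mul_assoc, hee] at h2
  -- h2 : e * d a + e * d (e*a) = 2 • (e * d a)
  have h3 : e * d (e * a) = e * d a := eq_of_sub_eq_sub' h2 (by abel)
  have h4 : d (e * a) = e * d a := by
    have h5 : (2 : ℕ) • d (e * a) = (2 : ℕ) • (e * d a) := by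
      rw [two_smul, h1, h3]
    have h6 : ((2 : ℕ) : ℂ) • d (e * a) = ((2 : ℕ) : ℂ) • (e * d a) := by
      rw [Nat.cast_smul_eq_nsmul, Nat.cast_smul_eq_nsmul]; exact h5
    exact smul_right_injective A (by norm_num : ((2 : ℕ) : ℂ) ≠ 0) h6
  have h7 := S' a
  rw [h4, two_smul] at h7
  have h8 : d a = e * d a := eq_of_sub_eq_sub' h7 (by abel)
  rw [h8, ← h4]
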